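/- The Tsirelson box P_Tsi(ab|xy) = (1 + (−1)^{a+b+xy}/√2)/4 has absolute robustness (√2 − 1)/2 with respect to the local (LOSR-free) polytope: the minimum s ≥ 0 such that (P_Tsi + sL)/(1+s) is a local box for some local box L equals (√2−1)/2. -/

import Mathlib

open scoped BigOperators

noncomputable section

/-- A bipartite box with binary inputs and outputs: `P a b x y` is the probability
of outputs `(a, b)` given inputs `(x, y)`. -/
abbrev Box := Fin 2 → Fin 2 → Fin 2 → Fin 2 → ℝ

/-- A no-signaling box: nonnegative, normalized, and no-signaling in both
directions. -/
def IsNSBox (P : Box) : Prop :=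
  (∀ a b x y, 0 ≤ P a b x y) ∧
  (∀ x y, ∑ a, ∑ b, P a b x y = 1) ∧
  (∀ a x y y', ∑ b, P a b x y = ∑ b, P a b x y') ∧
  (∀ b x x' y, ∑ a, P a b x y = ∑ a, P a b x' y)

/-- A local (LOSR-free) box: a convex combination of products of local (stochastic)
strategies. -/
def IsLocalBox (P : Box) : Prop :=
  ∃ (k : ℕ) (q : Fin k → ℝ) (PA PB : Fin k → Fin 2 → Fin 2 → ℝ),
    (∀ i, 0 ≤ q i) ∧ (∑ i, q i = 1) ∧
    (∀ i a x, 0 ≤ PA i a x) ∧ (∀ i x, ∑ a, PA i a x = 1) ∧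
    (∀ i b y, 0 ≤ PB i b y) ∧ (∀ i y, ∑ b, PB i b y = 1) ∧
    ∀ a b x y, P a b x y = ∑ i, q i * PA i a x * PB i b y

/-- The CHSH functional. -/
def chsh (P : Box) : ℝ :=
  ∑ a, ∑ b, ∑ x, ∑ y, (-1 : ℝ) ^ (a.val + b.val + x.val * y.val) * P a b x y

/-- The Tsirelson box. -/
def PTsi : Box := fun a b x y =>
  (1 + (-1 : ℝ) ^ (a.val + b.val + x.val * y.val) / Real.sqrt 2) / 4

/-- the absolute robustness of the Tsirelson box with respect to the
local polytope equals `(√2 − 1)/2`. -/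
-- auxiliary
lemma isLocalBox_congr {P Q : Box} (h : IsLocalBox P)
    (e : ∀ a b x y, Q a b x y = P a b x y) : IsLocalBox Q := by
  obtain ⟨k,q,PA,PB,h1,h2,h3,h4,h5,h6,h7⟩ := h
  exact ⟨k,q,PA,PB,h1,h2,h3,h4,h5,h6, fun a b x y => (e a b x y).trans (h7 a b x y)⟩

def fsP : Fin 8 → (Fin 2 → Fin 2) × (Fin 2 → Fin 2) :=
  ![(![0,0],![0,0]), (![0,0],![0,1]), (![0,1],![0,0]), (![0,1],![1,0]),
    (![1,0],![0,1]), (![1,0],![1,1]), (![1,1],![1,0]), (![1,1],![1,1])]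

def fsM : Fin 8 → (Fin 2 → Fin 2) × (Fin 2 → Fin 2) :=
  ![(![0,0],![1,0]), (![0,0],![1,1]), (![0,1],![0,1]), (![0,1],![1,1]),
    (![1,0],![0,0]), (![1,0],![1,0]), (![1,1],![0,0]), (![1,1],![0,1])]

lemma local_of_table (fs : Fin 8 → (Fin 2 → Fin 2) × (Fin 2 → Fin 2)) (P : Box)
    (hP : ∀ a b x y, P a b x y =
      ∑ i : Fin 8, (1/8 : ℝ) * (if a = (fs i).1 x then 1 else 0) * (if b = (fs i).2 y then 1 else 0)) :
    IsLocalBox P := by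
  refine ⟨8, fun _ => 1/8,
    fun i a x => if a = (fs i).1 x then 1 else 0,
    fun i b y => if b = (fs i).2 y then 1 else 0,
    fun i => by norm_num, by simp, ?_, ?_, ?_, ?_, hP⟩
  · intro i a x; dsimp only; split <;> norm_num
  · intro i x; simp [Fin.sum_univ_two]
  · intro i b y; dsimp only; split <;> norm_num
  · intro i y; simp [Fin.sum_univ_two]

lemma local_half : IsLocalBox (fun a b x y =>
    (1 + (-1 : ℝ) ^ (a.val + b.val + x.val * y.val) * (1/2)) / 4) := by
  apply local_of_table fsP
  intro a b x y
  fin_cases a <;> fin_cases b <;> fin_cases x <;> fin_cases y <;>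
    · simp [fsP, Fin.sum_univ_succ]
      norm_num

lemma local_mhalf : IsLocalBox (fun a b x y =>
    (1 + (-1 : ℝ) ^ (a.val + b.val + x.val * y.val) * (-(1/2))) / 4) := by
  apply local_of_table fsM
  intro a b x y
  fin_cases a <;> fin_cases b <;> fin_cases x <;> fin_cases y <;>
    · simp [fsM, Fin.sum_univ_succ]
      norm_num

lemma chsh_aux {a b c d : ℝ} (ha : -1 ≤ a) (ha' : a ≤ 1) (hb : -1 ≤ b) (hb' : b ≤ 1)
    (hc : -1 ≤ c) (hc' : c ≤ 1) (hd : -1 ≤ d) (hd' : d ≤ 1) :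
    a * c + a * d + b * c - b * d ≤ 2 := by
  nlinarith [mul_nonneg (mul_nonneg (mul_nonneg (by linarith : (0:ℝ) ≤ 1+a) (by linarith : (0:ℝ) ≤ 1+b)) (by linarith : (0:ℝ) ≤ 1+c)) (by linarith : (0:ℝ) ≤ 1+d),
    mul_nonneg (mul_nonneg (mul_nonneg (by linarith : (0:ℝ) ≤ 1+a) (by linarith : (0:ℝ) ≤ 1+b)) (by linarith : (0:ℝ) ≤ 1+c)) (by linarith : (0:ℝ) ≤ 1-d),
    mul_nonneg (mul_nonneg (mul_nonneg (by linarith : (0:ℝ) ≤ 1+a) (by linarith : (0:ℝ) ≤ 1+b)) (by linarith : (0:ℝ) ≤ 1-c)) (by linarith : (0:ℝ) ≤ 1+d),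
    mul_nonneg (mul_nonneg (mul_nonneg (by linarith : (0:ℝ) ≤ 1+a) (by linarith : (0:ℝ) ≤ 1+b)) (by linarith : (0:ℝ) ≤ 1-c)) (by linarith : (0:ℝ) ≤ 1-d),
    mul_nonneg (mul_nonneg (mul_nonneg (by linarith : (0:ℝ) ≤ 1+a) (by linarith : (0:ℝ) ≤ 1-b)) (by linarith : (0:ℝ) ≤ 1+c)) (by linarith : (0:ℝ) ≤ 1+d),
    mul_nonneg (mul_nonneg (mul_nonneg (by linarith : (0:ℝ) ≤ 1+a) (by linarith : (0:ℝ) ≤ 1-b)) (by linarith : (0:ℝ) ≤ 1+c)) (by linarith : (0:ℝ) ≤ 1-d),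
    mul_nonneg (mul_nonneg (mul_nonneg (by linarith : (0:ℝ) ≤ 1+a) (by linarith : (0:ℝ) ≤ 1-b)) (by linarith : (0:ℝ) ≤ 1-c)) (by linarith : (0:ℝ) ≤ 1+d),
    mul_nonneg (mul_nonneg (mul_nonneg (by linarith : (0:ℝ) ≤ 1+a) (by linarith : (0:ℝ) ≤ 1-b)) (by linarith : (0:ℝ) ≤ 1-c)) (by linarith : (0:ℝ) ≤ 1-d),
    mul_nonneg (mul_nonneg (mul_nonneg (by linarith : (0:ℝ) ≤ 1-a) (by linarith : (0:ℝ) ≤ 1+b)) (by linarith : (0:ℝ) ≤ 1+c)) (by linarith : (0:ℝ) ≤ 1+d),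
    mul_nonneg (mul_nonneg (mul_nonneg (by linarith : (0:ℝ) ≤ 1-a) (by linarith : (0:ℝ) ≤ 1+b)) (by linarith : (0:ℝ) ≤ 1+c)) (by linarith : (0:ℝ) ≤ 1-d),
    mul_nonneg (mul_nonneg (mul_nonneg (by linarith : (0:ℝ) ≤ 1-a) (by linarith : (0:ℝ) ≤ 1+b)) (by linarith : (0:ℝ) ≤ 1-c)) (by linarith : (0:ℝ) ≤ 1+d),
    mul_nonneg (mul_nonneg (mul_nonneg (by linarith : (0:ℝ) ≤ 1-a) (by linarith : (0:ℝ) ≤ 1+b)) (by linarith : (0:ℝ) ≤ 1-c)) (by linarith : (0:ℝ) ≤ 1-d),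
    mul_nonneg (mul_nonneg (mul_nonneg (by linarith : (0:ℝ) ≤ 1-a) (by linarith : (0:ℝ) ≤ 1-b)) (by linarith : (0:ℝ) ≤ 1+c)) (by linarith : (0:ℝ) ≤ 1+d),
    mul_nonneg (mul_nonneg (mul_nonneg (by linarith : (0:ℝ) ≤ 1-a) (by linarith : (0:ℝ) ≤ 1-b)) (by linarith : (0:ℝ) ≤ 1+c)) (by linarith : (0:ℝ) ≤ 1-d),
    mul_nonneg (mul_nonneg (mul_nonneg (by linarith : (0:ℝ) ≤ 1-a) (by linarith : (0:ℝ) ≤ 1-b)) (by linarith : (0:ℝ) ≤ 1-c)) (by linarith : (0:ℝ) ≤ 1+d),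
    mul_nonneg (mul_nonneg (mul_nonneg (by linarith : (0:ℝ) ≤ 1-a) (by linarith : (0:ℝ) ≤ 1-b)) (by linarith : (0:ℝ) ≤ 1-c)) (by linarith : (0:ℝ) ≤ 1-d)]

lemma chsh_local_le {P : Box} (h : IsLocalBox P) : -2 ≤ chsh P ∧ chsh P ≤ 2 := by
  obtain ⟨k, q, PA, PB, h1, h2, h3, h4, h5, h6, h7⟩ := h
  have hswap : ∀ (g : Fin 2 → Fin k → ℝ), (∑ y, ∑ i, g y i) = ∑ i, ∑ y, g y i :=
    fun g => Finset.sum_comm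
  have key : chsh P = ∑ i, q i *
      ((PA i 0 0 - PA i 1 0) * (PB i 0 0 - PB i 1 0)
      + (PA i 0 0 - PA i 1 0) * (PB i 0 1 - PB i 1 1)
      + (PA i 0 1 - PA i 1 1) * (PB i 0 0 - PB i 1 0)
      - (PA i 0 1 - PA i 1 1) * (PB i 0 1 - PB i 1 1)) := by
    simp only [chsh, h7, Finset.mul_sum, hswap]
    refine Finset.sum_congr rfl fun i _ => ?_
    simp only [Fin.sum_univ_two, Fin.val_zero, Fin.val_one]
    norm_num
    ring
  have bound : ∀ i, -2 ≤ ((PA i 0 0 - PA i 1 0) * (PB i 0 0 - PB i 1 0)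
      + (PA i 0 0 - PA i 1 0) * (PB i 0 1 - PB i 1 1)
      + (PA i 0 1 - PA i 1 1) * (PB i 0 0 - PB i 1 0)
      - (PA i 0 1 - PA i 1 1) * (PB i 0 1 - PB i 1 1)) ∧
      ((PA i 0 0 - PA i 1 0) * (PB i 0 0 - PB i 1 0)
      + (PA i 0 0 - PA i 1 0) * (PB i 0 1 - PB i 1 1)
      + (PA i 0 1 - PA i 1 1) * (PB i 0 0 - PB i 1 0)
      - (PA i 0 1 - PA i 1 1) * (PB i 0 1 - PB i 1 1)) ≤ 2 := by
    intro i
    have sA0 := h4 i 0; have sA1 := h4 i 1; have sB0 := h6 i 0; have sB1 := h6 i 1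
    simp only [Fin.sum_univ_two] at sA0 sA1 sB0 sB1
    have ha : -1 ≤ PA i 0 0 - PA i 1 0 := by linarith [h3 i 0 0]
    have ha' : PA i 0 0 - PA i 1 0 ≤ 1 := by linarith [h3 i 1 0]
    have hb : -1 ≤ PA i 0 1 - PA i 1 1 := by linarith [h3 i 0 1]
    have hb' : PA i 0 1 - PA i 1 1 ≤ 1 := by linarith [h3 i 1 1]
    have hc : -1 ≤ PB i 0 0 - PB i 1 0 := by linarith [h5 i 0 0]
    have hc' : PB i 0 0 - PB i 1 0 ≤ 1 := by linarith [h5 i 1 0]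
    have hd : -1 ≤ PB i 0 1 - PB i 1 1 := by linarith [h5 i 0 1]
    have hd' : PB i 0 1 - PB i 1 1 ≤ 1 := by linarith [h5 i 1 1]
    constructor
    · have := chsh_aux (a := -(PA i 0 0 - PA i 1 0)) (b := -(PA i 0 1 - PA i 1 1))
        (c := PB i 0 0 - PB i 1 0) (d := PB i 0 1 - PB i 1 1)
        (by linarith) (by linarith) (by linarith) (by linarith) hc hc' hd hd'
      linarith [this]
    · exact chsh_aux ha ha' hb hb' hc hc' hd hd'
  rw [key]
  constructor
  · have : (-2 : ℝ) = ∑ i, q i * (-2) := by rw [← Finset.sum_mul, h2]; ring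
    rw [this]
    exact Finset.sum_le_sum fun i _ =>
      mul_le_mul_of_nonneg_left (bound i).1 (h1 i)
  · have : (2 : ℝ) = ∑ i, q i * 2 := by rw [← Finset.sum_mul, h2]; ring
    rw [this]
    exact Finset.sum_le_sum fun i _ =>
      mul_le_mul_of_nonneg_left (bound i).2 (h1 i)

lemma chsh_PTsi : chsh PTsi = 2 * Real.sqrt 2 := by
  have h2 : Real.sqrt 2 * Real.sqrt 2 = 2 := Real.mul_self_sqrt (by norm_num)
  have hpos : (0:ℝ) < Real.sqrt 2 := Real.sqrt_pos.mpr (by norm_num)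
  simp only [chsh, PTsi, Fin.sum_univ_two, Fin.val_zero, Fin.val_one]
  norm_num
  field_simp
  nlinarith [h2, hpos]

lemma chsh_mix (P Q : Box) (s t : ℝ) :
    chsh (fun a b x y => (P a b x y + s * Q a b x y) / t) = (chsh P + s * chsh Q) / t := by
  simp only [chsh, Fin.sum_univ_two]
  ring

theorem stmt5 :
    sInf {s : ℝ | 0 ≤ s ∧ ∃ L, IsLocalBox L ∧
        IsLocalBox (fun a b x y => (PTsi a b x y + s * L a b x y) / (1 + s))} =
      (Real.sqrt 2 - 1) / 2 := by
  have h2 : Real.sqrt 2 * Real.sqrt 2 = 2 := Real.mul_self_sqrt (by norm_num)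
  have hge : 1 ≤ Real.sqrt 2 := by nlinarith [Real.sqrt_nonneg 2]
  have hne : Real.sqrt 2 ≠ 0 := by positivity
  apply IsLeast.csInf_eq
  constructor
  · refine ⟨by linarith, ⟨fun a b x y =>
      (1 + (-1 : ℝ) ^ (a.val + b.val + x.val * y.val) * (-(1/2))) / 4, local_mhalf, ?_⟩⟩
    apply isLocalBox_congr local_half
    intro a b x y
    simp only [PTsi]
    have hden : (1 : ℝ) + (Real.sqrt 2 - 1) / 2 ≠ 0 := by
      intro h; nlinarith [Real.sqrt_nonneg 2]
    set σ := (-1 : ℝ) ^ (a.val + b.val + x.val * y.val) with hσ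
    rw [div_eq_iff hden]
    field_simp
    ring_nf
    linear_combination (-2 * (-1 : ℝ) ^ (a.val + b.val + x.val * y.val)) * h2
  · rintro s ⟨hs0, L, hL, hM⟩
    have hcm := chsh_mix PTsi L s (1 + s)
    have hMle := (chsh_local_le hM).2
    rw [hcm, chsh_PTsi] at hMle
    have hLge := (chsh_local_le hL).1
    have hpos : (0:ℝ) < 1 + s := by linarith
    rw [div_le_iff₀ hpos] at hMle
    have hmul : s * (-2) ≤ s * chsh L := mul_le_mul_of_nonneg_left hLge hs0
    linarith
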